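/- Let n ≥ 3 be odd and Γ₁, …, Γₙ ∈ S² with cyclic indices. Then min_i arccos(Γᵢᵀ Γᵢ₊₁) = π − π/n if and only if there exist u, v ∈ S² with uᵀv = 0 such that Γᵢ = exp((i−1)(π − π/n) û) v for all i = 1, …, n, where û is the cross-product matrix of u. -/

import Mathlib

open Matrix Real

noncomputable section

/-- The hat (cross-product) matrix of `k`, satisfying `hat k *ᵥ y = k ×₃ y`. -/
def hat (k : Fin 3 → ℝ) : Matrix (Fin 3) (Fin 3) ℝ :=
  !![0, -k 2, k 1; k 2, 0, -k 0; -k 1, k 0, 0]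

/-- Membership in the unit 2-sphere. -/
def S2 (x : Fin 3 → ℝ) : Prop := x ⬝ᵥ x = 1

/-- Geodesic distance on the unit sphere. -/
def geo (x y : Fin 3 → ℝ) : ℝ := Real.arccos (x ⬝ᵥ y)

lemma dot_expand (x y : Fin 3 → ℝ) : x ⬝ᵥ y = x 0 * y 0 + x 1 * y 1 + x 2 * y 2 := by
  simp [dotProduct, Fin.sum_univ_three]

lemma dot_self_nonneg' (x : Fin 3 → ℝ) : 0 ≤ x ⬝ᵥ x := by
  rw [dot_expand]; nlinarith [sq_nonneg (x 0), sq_nonneg (x 1), sq_nonneg (x 2)]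

lemma eq_zero_of_dot_self (x : Fin 3 → ℝ) (h : x ⬝ᵥ x = 0) : x = 0 := by
  rw [dot_expand] at h
  funext i
  fin_cases i <;> simp <;> nlinarith [sq_nonneg (x 0), sq_nonneg (x 1), sq_nonneg (x 2)]

lemma cs (x y : Fin 3 → ℝ) : (x ⬝ᵥ y)^2 ≤ (x ⬝ᵥ x) * (y ⬝ᵥ y) := by
  rw [dot_expand, dot_expand, dot_expand]
  nlinarith [sq_nonneg (x 0 * y 1 - x 1 * y 0), sq_nonneg (x 0 * y 2 - x 2 * y 0),
    sq_nonneg (x 1 * y 2 - x 2 * y 1)]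

lemma neg_sqrt_le (x y : Fin 3 → ℝ) :
    -(Real.sqrt (x ⬝ᵥ x) * Real.sqrt (y ⬝ᵥ y)) ≤ x ⬝ᵥ y := by
  have h1 : |x ⬝ᵥ y| ≤ Real.sqrt (x ⬝ᵥ x) * Real.sqrt (y ⬝ᵥ y) := by
    rw [← Real.sqrt_sq_eq_abs, ← Real.sqrt_mul (dot_self_nonneg' x)]
    exact Real.sqrt_le_sqrt (cs x y)
  linarith [neg_abs_le (x ⬝ᵥ y)]

lemma dot_le_one (x y : Fin 3 → ℝ) (hx : x ⬝ᵥ x = 1) (hy : y ⬝ᵥ y = 1) :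
    x ⬝ᵥ y ≤ 1 := by nlinarith [cs x y, sq_nonneg (x ⬝ᵥ y)]

lemma neg_one_le_dot (x y : Fin 3 → ℝ) (hx : x ⬝ᵥ x = 1) (hy : y ⬝ᵥ y = 1) :
    -1 ≤ x ⬝ᵥ y := by nlinarith [cs x y, sq_nonneg (x ⬝ᵥ y)]

lemma arccos_antitone : Antitone Real.arccos := by
  intro x y h
  simp only [Real.arccos_eq_pi_div_two_sub_arcsin]
  linarith [Real.monotone_arcsin h]

lemma dot_sub_smul (a b c : Fin 3 → ℝ) (p q : ℝ) :
    (a - p • b) ⬝ᵥ (c - q • b) =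
      a ⬝ᵥ c - q * (a ⬝ᵥ b) - p * (b ⬝ᵥ c) + p * q * (b ⬝ᵥ b) := by
  simp only [dot_expand, Pi.sub_apply, Pi.smul_apply, smul_eq_mul]; ring

lemma tri (a b c : Fin 3 → ℝ) (ha : a ⬝ᵥ a = 1) (hb : b ⬝ᵥ b = 1) (hc : c ⬝ᵥ c = 1) :
    Real.arccos (a ⬝ᵥ c) ≤ Real.arccos (a ⬝ᵥ b) + Real.arccos (b ⬝ᵥ c) := by
  by_cases hle : π ≤ Real.arccos (a ⬝ᵥ b) + Real.arccos (b ⬝ᵥ c)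
  · exact le_trans (Real.arccos_le_pi _) hle
  push_neg at hle
  set α := Real.arccos (a ⬝ᵥ b) with hα
  set γ := Real.arccos (b ⬝ᵥ c) with hγ
  have hα0 : 0 ≤ α := Real.arccos_nonneg _
  have hγ0 : 0 ≤ γ := Real.arccos_nonneg _
  have hp1 : a ⬝ᵥ b ≤ 1 := dot_le_one _ _ ha hb
  have hp1' : -1 ≤ a ⬝ᵥ b := neg_one_le_dot _ _ ha hb
  have hq1 : b ⬝ᵥ c ≤ 1 := dot_le_one _ _ hb hc
  have hq1' : -1 ≤ b ⬝ᵥ c := neg_one_le_dot _ _ hb hc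
  have hcosα : Real.cos α = a ⬝ᵥ b := Real.cos_arccos hp1' hp1
  have hcosγ : Real.cos γ = b ⬝ᵥ c := Real.cos_arccos hq1' hq1
  have hsinα : Real.sin α = Real.sqrt (1 - (a ⬝ᵥ b) ^ 2) := Real.sin_arccos _
  have hsinγ : Real.sin γ = Real.sqrt (1 - (b ⬝ᵥ c) ^ 2) := Real.sin_arccos _
  have hxx : (a - (a ⬝ᵥ b) • b) ⬝ᵥ (a - (a ⬝ᵥ b) • b) = 1 - (a ⬝ᵥ b) ^ 2 := by
    rw [dot_sub_smul, dotProduct_comm b a, ha, hb]; ring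
  have hyy : (c - (b ⬝ᵥ c) • b) ⬝ᵥ (c - (b ⬝ᵥ c) • b) = 1 - (b ⬝ᵥ c) ^ 2 := by
    rw [dot_sub_smul, dotProduct_comm c b, hc, hb]; ring
  have hxy : (a - (a ⬝ᵥ b) • b) ⬝ᵥ (c - (b ⬝ᵥ c) • b) = a ⬝ᵥ c - (a ⬝ᵥ b) * (b ⬝ᵥ c) := by
    rw [dot_sub_smul, hb]; ring
  have key : Real.cos (α + γ) ≤ a ⬝ᵥ c := by
    rw [Real.cos_add, hcosα, hcosγ, hsinα, hsinγ]
    have := neg_sqrt_le (a - (a ⬝ᵥ b) • b) (c - (b ⬝ᵥ c) • b)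
    rw [hxx, hyy, hxy] at this
    linarith
  calc Real.arccos (a ⬝ᵥ c) ≤ Real.arccos (Real.cos (α + γ)) := arccos_antitone key
      _ = α + γ := Real.arccos_cos (by linarith) (by linarith)

def cross3 (a b : Fin 3 → ℝ) : Fin 3 → ℝ :=
  ![a 1 * b 2 - a 2 * b 1, a 2 * b 0 - a 0 * b 2, a 0 * b 1 - a 1 * b 0]

lemma hat_mulVec (u y : Fin 3 → ℝ) : hat u *ᵥ y = cross3 u y := by
  funext i
  fin_cases i <;>
    simp [hat, cross3, Matrix.mulVec, dotProduct, Fin.sum_univ_three] <;> ring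

lemma cross3_dot_self (a b : Fin 3 → ℝ) :
    cross3 a b ⬝ᵥ cross3 a b = (a ⬝ᵥ a) * (b ⬝ᵥ b) - (a ⬝ᵥ b) ^ 2 := by
  simp [cross3, dot_expand, Matrix.vecHead, Matrix.vecTail]; ring

lemma cross3_dot_left (a b : Fin 3 → ℝ) : cross3 a b ⬝ᵥ a = 0 := by
  simp [cross3, dot_expand, Matrix.vecHead, Matrix.vecTail]; ring

lemma cross3_dot_right (a b : Fin 3 → ℝ) : cross3 a b ⬝ᵥ b = 0 := by
  simp [cross3, dot_expand, Matrix.vecHead, Matrix.vecTail]; ring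

lemma hat_cross_mulVec (a b c : Fin 3 → ℝ) :
    hat (cross3 a b) *ᵥ c = (a ⬝ᵥ c) • b - (b ⬝ᵥ c) • a := by
  funext i
  fin_cases i <;>
    simp [hat, cross3, dot_expand, Matrix.mulVec, dotProduct, Fin.sum_univ_three] <;> ring

lemma cross3_cross3 (u v : Fin 3 → ℝ) :
    cross3 u (cross3 u v) = (u ⬝ᵥ v) • u - (u ⬝ᵥ u) • v := by
  funext i
  fin_cases i <;>
    simp [cross3, dot_expand, Matrix.vecHead, Matrix.vecTail] <;> ring

lemma rodrigues (A : Matrix (Fin 3) (Fin 3) ℝ) (v w : Fin 3 → ℝ)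
    (hv : A *ᵥ v = w) (hw : A *ᵥ w = -v) (t : ℝ) :
    NormedSpace.exp (t • A) *ᵥ v = Real.cos t • v + Real.sin t • w := by
  letI : SeminormedRing (Matrix (Fin 3) (Fin 3) ℝ) := Matrix.linftyOpSemiNormedRing
  letI : NormedRing (Matrix (Fin 3) (Fin 3) ℝ) := Matrix.linftyOpNormedRing
  letI : NormedAlgebra ℝ (Matrix (Fin 3) (Fin 3) ℝ) := Matrix.linftyOpNormedAlgebra
  -- the linear map M ↦ M *ᵥ v as a continuous linear map
  let L : Matrix (Fin 3) (Fin 3) ℝ →ₗ[ℝ] (Fin 3 → ℝ) :=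
    { toFun := fun M => M *ᵥ v
      map_add' := fun M N => Matrix.add_mulVec M N v
      map_smul' := fun r M => Matrix.smul_mulVec r M v }
  have hLc : Continuous L := LinearMap.continuous_of_finiteDimensional L
  have h1 : HasSum (fun n : ℕ => ((Nat.factorial n : ℝ)⁻¹ • (t • A) ^ n)) (NormedSpace.exp (t • A)) :=
    NormedSpace.exp_series_hasSum_exp' (t • A)
  have h2 : HasSum (fun n : ℕ => ((Nat.factorial n : ℝ)⁻¹ • ((t • A) ^ n *ᵥ v)))
      (NormedSpace.exp (t • A) *ᵥ v) := by
    have := (⟨L, hLc⟩ : Matrix (Fin 3) (Fin 3) ℝ →L[ℝ] (Fin 3 → ℝ)).hasSum h1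
    simpa [L] using this
  -- computing the powers
  have hpow : ∀ n : ℕ, A ^ n *ᵥ v = (Complex.I ^ n).re • v + (Complex.I ^ n).im • w := by
    intro n
    induction n with
    | zero => simp
    | succ n ih =>
      rw [pow_succ', ← Matrix.mulVec_mulVec, ih, Matrix.mulVec_add]
      rw [Matrix.mulVec_smul, Matrix.mulVec_smul, hv, hw, pow_succ, Complex.mul_re,
        Complex.mul_im]
      simp only [Complex.I_re, Complex.I_im]
      module
  -- complex exp sums
  have hC : HasSum (fun n : ℕ => ((Nat.factorial n : ℂ)⁻¹ • ((t : ℂ) * Complex.I) ^ n))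
      (Complex.exp ((t : ℂ) * Complex.I)) := by
    rw [Complex.exp_eq_exp_ℂ]
    exact NormedSpace.exp_series_hasSum_exp' _
  have hre : HasSum (fun n : ℕ => (Nat.factorial n : ℝ)⁻¹ * (t ^ n * (Complex.I ^ n).re)) (Real.cos t) := by
    have h := Complex.reCLM.hasSum hC
    have e1 : (Complex.exp ((t : ℂ) * Complex.I)).re = Real.cos t := by
      rw [Complex.exp_mul_I]; simp [Complex.cos_ofReal_re, Complex.sin_ofReal_im]
    simp only [Complex.reCLM_apply] at h
    rw [e1] at h
    convert h using 2 with n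
    rw [mul_pow, smul_eq_mul]
    simp [Complex.mul_re, Complex.mul_im, ← Complex.ofReal_pow]
  have him : HasSum (fun n : ℕ => (Nat.factorial n : ℝ)⁻¹ * (t ^ n * (Complex.I ^ n).im)) (Real.sin t) := by
    have h := Complex.imCLM.hasSum hC
    have e1 : (Complex.exp ((t : ℂ) * Complex.I)).im = Real.sin t := by
      rw [Complex.exp_mul_I]; simp [Complex.sin_ofReal_re, Complex.cos_ofReal_im]
    simp only [Complex.imCLM_apply] at h
    rw [e1] at h
    convert h using 2 with n
    rw [mul_pow, smul_eq_mul]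
    simp [Complex.mul_re, Complex.mul_im, ← Complex.ofReal_pow]
  have h3 : HasSum (fun n : ℕ => ((Nat.factorial n : ℝ)⁻¹ • ((t • A) ^ n *ᵥ v)))
      (Real.cos t • v + Real.sin t • w) := by
    have := (hre.smul_const v).add (him.smul_const w)
    convert this using 2 with n
    rw [smul_pow, Matrix.smul_mulVec, hpow]
    module
  exact h2.unique h3

theorem stmt_6 (n : ℕ) (hn : 3 ≤ n) (hodd : Odd n) (Γ : ℕ → Fin 3 → ℝ)
    (hS : ∀ i, S2 (Γ i)) (hper : Γ n = Γ 0) :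
    (Finset.range n).inf' (Finset.nonempty_range_iff.mpr (by omega))
        (fun i => geo (Γ i) (Γ (i + 1))) = π - π / n ↔
      ∃ u v : Fin 3 → ℝ, S2 u ∧ S2 v ∧ u ⬝ᵥ v = 0 ∧
        ∀ i < n, Γ i = NormedSpace.exp (((i : ℝ) * (π - π / n)) • hat u) *ᵥ v := by
  constructor
  · intro h
    have hn1 : 1 ≤ n := by omega
    have hnR : (0 : ℝ) < n := by positivity
    have hδpos : 0 < π / n := by positivity
    have hδle : π / n ≤ π / 3 := by
      apply div_le_div_of_nonneg_left pi_pos.le (by norm_num)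
      exact_mod_cast hn
    have hδlt : π / n < π := by nlinarith [pi_pos]
    have hnπ : (n : ℝ) * (π / n) = π := by field_simp
    have hunit : ∀ i, Γ i ⬝ᵥ Γ i = 1 := hS
    have hedge : ∀ i < n, Γ i ⬝ᵥ Γ (i + 1) ≤ Real.cos (π - π / n) := by
      intro i hi
      have h1 : π - π / n ≤ geo (Γ i) (Γ (i + 1)) := by
        rw [← h]; exact Finset.inf'_le _ (Finset.mem_range.mpr hi)
      have h2 := Real.cos_le_cos_of_nonneg_of_le_pi (by linarith) (Real.arccos_le_pi _) h1
      rwa [Real.cos_arccos (neg_one_le_dot _ _ (hunit i) (hunit (i + 1)))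
        (dot_le_one _ _ (hunit i) (hunit (i + 1)))] at h2
    set y : ℕ → Fin 3 → ℝ := fun i => ((-1 : ℝ) ^ i) • Γ i with hy
    have hsq : ∀ i : ℕ, ((-1 : ℝ)) ^ i * (-1) ^ i = 1 := by
      intro i; rw [← pow_add]; exact Even.neg_one_pow ⟨i, rfl⟩
    have hyy : ∀ i, y i ⬝ᵥ y i = 1 := by
      intro i
      simp only [hy, smul_dotProduct, dotProduct_smul, smul_eq_mul]
      rw [hunit i]
      linear_combination hsq i
    have hstep_le : ∀ i < n, Real.cos (π / n) ≤ y i ⬝ᵥ y (i + 1) := by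
      intro i hi
      have hd : y i ⬝ᵥ y (i + 1) = -(Γ i ⬝ᵥ Γ (i + 1)) := by
        simp only [hy, smul_dotProduct, dotProduct_smul, smul_eq_mul]
        rw [pow_succ]
        linear_combination (-(Γ i ⬝ᵥ Γ (i + 1))) * hsq i
      rw [hd]
      have h2 := hedge i hi
      rw [Real.cos_pi_sub] at h2
      linarith
    have hstep' : ∀ i < n, Real.arccos (y i ⬝ᵥ y (i + 1)) ≤ π / n := by
      intro i hi
      calc Real.arccos (y i ⬝ᵥ y (i + 1)) ≤ Real.arccos (Real.cos (π / n)) :=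
            arccos_antitone (hstep_le i hi)
        _ = π / n := Real.arccos_cos hδpos.le hδlt.le
    have hchain : ∀ k i, i + k ≤ n → Real.arccos (y i ⬝ᵥ y (i + k)) ≤ k * (π / n) := by
      intro k
      induction k with
      | zero =>
        intro i _
        rw [add_zero, hyy i, Real.arccos_one]
        norm_num
      | succ k ih =>
        intro i hik
        have h1 := ih i (by omega)
        have h2 := hstep' (i + k) (by omega)
        have h3 := tri (y i) (y (i + k)) (y (i + k + 1)) (hyy _) (hyy _) (hyy _)
        rw [show i + (k + 1) = i + k + 1 from by omega]
        push_cast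
        nlinarith [hδpos]
    have hyn : y n = -(y 0) := by
      simp only [hy]
      rw [hper, hodd.neg_one_pow, pow_zero, one_smul, neg_smul, one_smul]
    have h0n : Real.arccos (y 0 ⬝ᵥ y n) = π := by
      rw [hyn, dotProduct_neg, hyy 0, Real.arccos_neg_one]
    have hfix : ∀ i ≤ n, Real.arccos (y 0 ⬝ᵥ y i) = i * (π / n) := by
      intro i hin
      have hup : Real.arccos (y 0 ⬝ᵥ y i) ≤ i * (π / n) := by
        have := hchain i 0 (by omega)
        simpa using this
      have hdown : (i : ℝ) * (π / n) ≤ Real.arccos (y 0 ⬝ᵥ y i) := by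
        have h3 := tri (y 0) (y i) (y n) (hyy _) (hyy _) (hyy _)
        have h4 := hchain (n - i) i (by omega)
        rw [show i + (n - i) = n from by omega] at h4
        rw [h0n] at h3
        have hc : ((n - i : ℕ) : ℝ) * (π / n) = π - i * (π / n) := by
          rw [Nat.cast_sub hin]
          linear_combination hnπ
        rw [hc] at h4
        linarith
      linarith
    have hdot0 : ∀ i ≤ n, y 0 ⬝ᵥ y i = Real.cos (i * (π / n)) := by
      intro i hin
      rw [← hfix i hin]
      exact (Real.cos_arccos (neg_one_le_dot _ _ (hyy 0) (hyy i))
        (dot_le_one _ _ (hyy 0) (hyy i))).symm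
    have hdotstep : ∀ i, i + 1 ≤ n → y i ⬝ᵥ y (i + 1) = Real.cos (π / n) := by
      intro i hin
      have h1 : Real.arccos (y i ⬝ᵥ y (i + 1)) ≤ π / n := hstep' i (by omega)
      have h2 : π / n ≤ Real.arccos (y i ⬝ᵥ y (i + 1)) := by
        have h3 := tri (y 0) (y i) (y (i + 1)) (hyy _) (hyy _) (hyy _)
        rw [hfix i (by omega), hfix (i + 1) hin] at h3
        push_cast at h3
        linarith
      have h4 : Real.arccos (y i ⬝ᵥ y (i + 1)) = π / n := le_antisymm h1 h2
      rw [← h4]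
      exact (Real.cos_arccos (neg_one_le_dot _ _ (hyy i) (hyy (i + 1)))
        (dot_le_one _ _ (hyy i) (hyy (i + 1)))).symm
    have hsδ : 0 < Real.sin (π / n) := Real.sin_pos_of_pos_of_lt_pi hδpos hδlt
    set e : Fin 3 → ℝ := (Real.sin (π / n))⁻¹ • (y 1 - Real.cos (π / n) • y 0) with he
    have h01 : y 0 ⬝ᵥ y 1 = Real.cos (π / n) := by
      have := hdot0 1 (by omega)
      simpa using this
    have h0e : y 0 ⬝ᵥ e = 0 := by
      rw [he]
      simp only [dotProduct_smul, dotProduct_sub, smul_eq_mul, hyy 0, h01]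
      ring
    have hee : e ⬝ᵥ e = 1 := by
      rw [he]
      simp only [smul_dotProduct, dotProduct_smul, sub_dotProduct,
        dotProduct_sub, smul_eq_mul, hyy 0, hyy 1, h01, dotProduct_comm (y 1) (y 0),
        h01]
      have hs2 : Real.sin (π / n) ^ 2 = 1 - Real.cos (π / n) ^ 2 := by
        have := Real.sin_sq_add_cos_sq (π / n); linarith
      field_simp
      linear_combination (-1 : ℝ) * hs2
    have hplane : ∀ i ≤ n, y i = Real.cos (i * (π / n)) • y 0 + Real.sin (i * (π / n)) • e := by
      intro i
      induction i with
      | zero => intro _; simp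
      | succ i ih =>
        intro hin
        rcases Nat.eq_zero_or_pos i with h0 | hpos
        · subst h0
          push_cast
          rw [one_mul, he, smul_inv_smul₀ hsδ.ne']
          module
        · have ih' := ih (by omega)
          have hi1 : (1 : ℝ) ≤ i := by exact_mod_cast hpos
          have hiub : (i : ℝ) * (π / n) ≤ π - π / n := by
            have hi2 : (i : ℝ) ≤ (n : ℝ) - 1 := by
              have : (i : ℝ) + 1 ≤ (n : ℝ) := by exact_mod_cast hin
              linarith
            nlinarith [hδpos]
          have hsini : 0 < Real.sin ((i : ℝ) * (π / n)) := by
            apply Real.sin_pos_of_pos_of_lt_pi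
            · nlinarith [hδpos]
            · linarith
          have hstep := hdotstep i hin
          rw [ih'] at hstep
          simp only [add_dotProduct, smul_dotProduct, smul_eq_mul] at hstep
          rw [hdot0 (i + 1) hin] at hstep
          have hcs : Real.cos (π / n) =
              Real.cos (((i + 1 : ℕ) : ℝ) * (π / n)) * Real.cos ((i : ℝ) * (π / n)) +
                Real.sin (((i + 1 : ℕ) : ℝ) * (π / n)) * Real.sin ((i : ℝ) * (π / n)) := by
            rw [← Real.cos_sub]
            congr 1
            push_cast; ring
          have hX : e ⬝ᵥ y (i + 1) = Real.sin (((i + 1 : ℕ) : ℝ) * (π / n)) := by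
            apply mul_left_cancel₀ hsini.ne'
            linear_combination hstep + hcs
          have hz : (y (i + 1) - (Real.cos (((i + 1 : ℕ) : ℝ) * (π / n)) • y 0 +
              Real.sin (((i + 1 : ℕ) : ℝ) * (π / n)) • e)) ⬝ᵥ
              (y (i + 1) - (Real.cos (((i + 1 : ℕ) : ℝ) * (π / n)) • y 0 +
              Real.sin (((i + 1 : ℕ) : ℝ) * (π / n)) • e)) = 0 := by
            simp only [sub_dotProduct, dotProduct_sub, add_dotProduct,
              dotProduct_add, smul_dotProduct, dotProduct_smul, smul_eq_mul]
            rw [hyy (i + 1), hyy 0, hee, h0e, hdot0 (i + 1) hin, hX,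
              dotProduct_comm (y (i + 1)) (y 0), hdot0 (i + 1) hin,
              dotProduct_comm (y (i + 1)) e, hX, dotProduct_comm e (y 0), h0e]
            linear_combination -Real.sin_sq_add_cos_sq (((i + 1 : ℕ) : ℝ) * (π / n))
          have hz2 := eq_zero_of_dot_self _ hz
          rw [sub_eq_zero] at hz2
          exact hz2
    -- assemble the witnesses
    have hy0 : y 0 = Γ 0 := by simp [hy]
    have hΓ0e : Γ 0 ⬝ᵥ e = 0 := by rw [← hy0]; exact h0e
    refine ⟨cross3 (Γ 0) (-e), Γ 0, ?_, hS 0, ?_, ?_⟩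
    · show cross3 (Γ 0) (-e) ⬝ᵥ cross3 (Γ 0) (-e) = 1
      rw [cross3_dot_self, hunit 0, dotProduct_neg, neg_dotProduct,
        dotProduct_neg, hΓ0e, hee]
      ring
    · exact cross3_dot_left (Γ 0) (-e)
    · intro i hi
      have hA1 : hat (cross3 (Γ 0) (-e)) *ᵥ (Γ 0) = -e := by
        rw [hat_cross_mulVec, hunit 0, one_smul, neg_dotProduct,
          dotProduct_comm e (Γ 0), hΓ0e]
        simp
      have hA2 : hat (cross3 (Γ 0) (-e)) *ᵥ (-e) = -(Γ 0) := by
        rw [hat_cross_mulVec, dotProduct_neg, hΓ0e, neg_dotProduct,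
          dotProduct_neg, hee]
        simp
      rw [rodrigues _ _ _ hA1 hA2]
      have hyi := hplane i (le_of_lt hi)
      have hΓi : Γ i = ((-1 : ℝ) ^ i) • y i := by
        simp [hy, smul_smul, hsq i]
      have hcosi : Real.cos ((i : ℝ) * (π - π / n)) = (-1) ^ i * Real.cos ((i : ℝ) * (π / n)) := by
        rw [show (i : ℝ) * (π - π / n) = (i : ℝ) * π - (i : ℝ) * (π / n) by ring,
          Real.cos_nat_mul_pi_sub]
      have hsine : Real.sin ((i : ℝ) * (π - π / n)) =
          -((-1) ^ i * Real.sin ((i : ℝ) * (π / n))) := by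
        rw [show (i : ℝ) * (π - π / n) = (i : ℝ) * π - (i : ℝ) * (π / n) by ring,
          Real.sin_nat_mul_pi_sub]
      rw [hΓi, hyi, hy0, hcosi, hsine]
      match_scalars <;> ring
  · intro h
    obtain ⟨u, v, hu, hv, huv, hform⟩ := h
    have hnR : (0 : ℝ) < n := by positivity
    have hδpos : 0 < π / n := by positivity
    have hδle : π / n ≤ π / 3 := by
      apply div_le_div_of_nonneg_left pi_pos.le (by norm_num)
      exact_mod_cast hn
    have hθ0 : 0 < π - π / n := by nlinarith [pi_pos]
    have hθπ : π - π / n < π := by linarith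
    -- the orthonormal frame
    set w : Fin 3 → ℝ := cross3 u v with hwdef
    have hform' : ∀ i < n, Γ i = Real.cos (i * (π - π / n)) • v + Real.sin (i * (π - π / n)) • w := by
      intro i hi
      rw [hform i hi, rodrigues (hat u) v w]
      · rw [hat_mulVec]
      · rw [hat_mulVec, hwdef, cross3_cross3, huv, show u ⬝ᵥ u = 1 from hu]
        simp
    -- orthonormality facts
    have hvv : v ⬝ᵥ v = 1 := hv
    have hww : w ⬝ᵥ w = 1 := by
      rw [hwdef, cross3_dot_self, show u ⬝ᵥ u = 1 from hu, hvv, huv]; ring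
    have hvw : v ⬝ᵥ w = 0 := by
      rw [hwdef, dotProduct_comm, cross3_dot_right]
    -- each edge has dot product cos θ
    have hnπ : (n : ℝ) * (π / n) = π := by field_simp
    have pairdot : ∀ i < n, Γ i ⬝ᵥ Γ (i + 1) = Real.cos (π - π / n) := by
      intro i hi
      rcases lt_or_eq_of_le (Nat.succ_le_of_lt hi) with hi1 | hi1
      · rw [hform' i hi, hform' (i + 1) hi1]
        simp only [add_dotProduct, dotProduct_add, smul_dotProduct,
          dotProduct_smul, smul_eq_mul, hvv, hww, hvw, dotProduct_comm w v, hvw]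
        rw [show ((i + 1 : ℕ) : ℝ) * (π - π / n) = ((i : ℝ) * (π - π / n)) + (π - π / n) by
          push_cast; ring]
        rw [Real.cos_add, Real.sin_add]
        linear_combination Real.cos (π - π / n) * Real.sin_sq_add_cos_sq ((i : ℝ) * (π - π / n))
      · have hΓ0 : Γ 0 = v := by
          rw [hform' 0 (by omega)]; norm_num
        have hΓn : Γ (i + 1) = v := by rw [show i + 1 = n from hi1, hper, hΓ0]
        rw [hform' i hi, hΓn]
        simp only [add_dotProduct, smul_dotProduct, smul_eq_mul, hvv,
          dotProduct_comm w v, hvw]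
        have hiℝ : (i : ℝ) = (n : ℝ) - 1 := by
          have : i = n - 1 := by omega
          rw [this]; push_cast [Nat.cast_sub (by omega : 1 ≤ n)]; ring
        have heven : Even i := by
          obtain ⟨k, hk⟩ := hodd; exact ⟨k, by omega⟩
        rw [show (i : ℝ) * (π - π / n) = (i : ℝ) * π - (i : ℝ) * (π / n) by ring]
        rw [show (i : ℝ) * π - (i : ℝ) * (π / n) = (i : ℝ) * π - ((i : ℝ) * (π / n)) by ring]
        rw [Real.cos_nat_mul_pi_sub, heven.neg_one_pow, one_mul]
        rw [hiℝ, show ((n : ℝ) - 1) * (π / n) = (n : ℝ) * (π / n) - π / n by ring, hnπ]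
        rw [Real.cos_pi_sub]
        ring
    -- conclude
    have hgeo : ∀ i < n, geo (Γ i) (Γ (i + 1)) = π - π / n := by
      intro i hi
      rw [geo, pairdot i hi, Real.arccos_cos (by linarith) (by linarith)]
    apply le_antisymm
    · have h0 : (0 : ℕ) ∈ Finset.range n := Finset.mem_range.mpr (by omega)
      calc _ ≤ geo (Γ 0) (Γ 1) := Finset.inf'_le _ h0
        _ = π - π / n := hgeo 0 (by omega)
    · apply Finset.le_inf'
      intro i hi
      rw [hgeo i (Finset.mem_range.mp hi)]
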